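/- arXiv:1411.4159 — 3 statements merged into one kernel-verified Lean document; each statement's English description precedes it below -/
import Mathlib

section
/- Let R be a ring with identity. Then APOG(R) is connected if and only if A^l(IPO(R)) = A^r(IPO(R)). Moreover, if APOG(R) is connected, then every pair of distinct vertices of APOG(R) is joined by a directed path of length at most 3, i.e., diam(APOG(R)) ≤ 3. -/
open scoped Pointwise

/-- `I` is a left ideal of the ring `R`: an additive subgroup with `R·I ⊆ I`. -/
def IsLeftIdeal (R : Type*) [Ring R] (I : AddSubgroup R) : Prop :=
  ∀ r : R, ∀ x ∈ I, r * x ∈ I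

/-- `I` is a right ideal of the ring `R`: an additive subgroup with `I·R ⊆ I`. -/
def IsRightIdeal (R : Type*) [Ring R] (I : AddSubgroup R) : Prop :=
  ∀ r : R, ∀ x ∈ I, x * r ∈ I

/-- `I` is a one-sided (left or right) ideal of `R`. -/
def IsOneSidedIdeal (R : Type*) [Ring R] (I : AddSubgroup R) : Prop :=
  IsLeftIdeal R I ∨ IsRightIdeal R I

/-- `IPO(R)`: the set of all products `I*J` of two one-sided ideals of `R`.
Here `I * J` is the additive subgroup generated by `{a*b : a ∈ I, b ∈ J}`
(the pointwise product of additive subgroups). -/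
def IPO (R : Type*) [Ring R] : Set (AddSubgroup R) :=
  {A | ∃ I J : AddSubgroup R, IsOneSidedIdeal R I ∧ IsOneSidedIdeal R J ∧ A = I * J}

/-- `A` is a vertex of `APOG(R) = Γ(IPO(R))`: a nonzero element of `IPO(R)` that is a
one-sided zero-divisor of the semigroup `IPO(R)`. -/
def APOGVertex (R : Type*) [Ring R] (A : AddSubgroup R) : Prop :=
  A ∈ IPO R ∧ A ≠ ⊥ ∧ ∃ B ∈ IPO R, B ≠ ⊥ ∧ (A * B = ⊥ ∨ B * A = ⊥)

/-- The directed edge `A → B` of `APOG(R)`: both are vertices, `A ≠ B` and `A*B = 0`. -/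
def APOGEdge (R : Type*) [Ring R] (A B : AddSubgroup R) : Prop :=
  APOGVertex R A ∧ APOGVertex R B ∧ A ≠ B ∧ A * B = ⊥

/-- `APOG(R)` is connected: for any two distinct vertices there is a directed path from
the first to the second through vertices. -/
def APOGConnected (R : Type*) [Ring R] : Prop :=
  ∀ A B : AddSubgroup R, APOGVertex R A → APOGVertex R B → A ≠ B →
    Relation.TransGen (APOGEdge R) A B

/-- There is a directed path of length at most `3` from `A` to `B` in `APOG(R)`. -/
def APOGPathLe3 (R : Type*) [Ring R] (A B : AddSubgroup R) : Prop :=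
  APOGEdge R A B ∨ (∃ C, APOGEdge R A C ∧ APOGEdge R C B) ∨
    ∃ C D, APOGEdge R A C ∧ APOGEdge R C D ∧ APOGEdge R D B

/-- `A^l(IPO(R))`. -/
def AleftIPO (R : Type*) [Ring R] : Set (AddSubgroup R) :=
  {A | APOGVertex R A ∧ ∃ B, APOGVertex R B ∧ B * A = ⊥}

/-- `A^r(IPO(R))`. -/
def ArightIPO (R : Type*) [Ring R] : Set (AddSubgroup R) :=
  {A | APOGVertex R A ∧ ∃ B, APOGVertex R B ∧ A * B = ⊥}

section Aux

variable {R : Type*} [Ring R]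

theorem ag_mul_mem_mul {M N : AddSubgroup R} {m n : R} (hm : m ∈ M) (hn : n ∈ N) :
    m * n ∈ M * N :=
  AddSubmonoid.mul_mem_mul hm hn

theorem ag_mul_le {M N P : AddSubgroup R} (h : ∀ m ∈ M, ∀ n ∈ N, m * n ∈ P) :
    M * N ≤ P := fun _r hr =>
  AddSubmonoid.mul_induction_on hr h fun _ _ hx hy => add_mem hx hy

theorem ag_mul_eq_bot {M N : AddSubgroup R} (h : ∀ m ∈ M, ∀ n ∈ N, m * n = 0) :
    M * N = ⊥ :=
  (eq_bot_iff).2 <| ag_mul_le fun m hm n hn => by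
    rw [AddSubgroup.mem_bot]; exact h m hm n hn

theorem ag_mul_assoc (A B C : AddSubgroup R) : A * B * C = A * (B * C) := by
  apply le_antisymm
  · refine ag_mul_le fun mn hmn p hp => ?_
    refine AddSubmonoid.mul_induction_on hmn (fun m hm n hn => ?_) (fun x y hx hy => ?_)
    · rw [mul_assoc]; exact ag_mul_mem_mul hm (ag_mul_mem_mul hn hp)
    · rw [add_mul]; exact add_mem hx hy
  · refine ag_mul_le fun m hm np hnp => ?_
    refine AddSubmonoid.mul_induction_on hnp (fun n hn p hp => ?_) (fun x y hx hy => ?_)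
    · rw [← mul_assoc]; exact ag_mul_mem_mul (ag_mul_mem_mul hm hn) hp
    · rw [mul_add]; exact add_mem hx hy

theorem ag_bot_mul (A : AddSubgroup R) : (⊥ : AddSubgroup R) * A = ⊥ :=
  ag_mul_eq_bot fun m hm n _ => by
    rw [AddSubgroup.mem_bot] at hm; rw [hm, zero_mul]

theorem ag_mul_bot (A : AddSubgroup R) : A * (⊥ : AddSubgroup R) = ⊥ :=
  ag_mul_eq_bot fun m _ n hn => by
    rw [AddSubgroup.mem_bot] at hn; rw [hn, mul_zero]

theorem isLeftIdeal_mul {I J : AddSubgroup R} (h : IsLeftIdeal R I) :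
    IsLeftIdeal R (I * J) := by
  intro r x hx
  refine AddSubmonoid.mul_induction_on hx (fun a ha b hb => ?_) (fun x y hx hy => ?_)
  · rw [← mul_assoc]; exact ag_mul_mem_mul (h r a ha) hb
  · rw [mul_add]; exact add_mem hx hy

theorem mul_isRightIdeal {I J : AddSubgroup R} (h : IsRightIdeal R J) :
    IsRightIdeal R (I * J) := by
  intro r x hx
  refine AddSubmonoid.mul_induction_on hx (fun a ha b hb => ?_) (fun x y hx hy => ?_)
  · rw [mul_assoc]; exact ag_mul_mem_mul ha (h r b hb)
  · rw [add_mul]; exact add_mem hx hy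

theorem IPO_mul_mem {A B : AddSubgroup R} (hA : A ∈ IPO R) (hB : B ∈ IPO R) :
    A * B ∈ IPO R := by
  obtain ⟨I, J, hI, hJ, rfl⟩ := hA
  obtain ⟨K, L, hK, hL, rfl⟩ := hB
  rcases hJ with hJl | hJr
  · exact ⟨I, J * (K * L), hI, Or.inl (isLeftIdeal_mul hJl),
      by rw [ag_mul_assoc]⟩
  · rcases hK with hKl | hKr
    · exact ⟨I * J, K * L, Or.inr (mul_isRightIdeal hJr), Or.inl (isLeftIdeal_mul hKl), rfl⟩
    · exact ⟨I * J * K, L, Or.inr (mul_isRightIdeal hKr), hL,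
        by rw [ag_mul_assoc (I * J) K L]⟩

/-- Any nonzero element of `IPO R` annihilated on one side by a vertex is a vertex. -/
theorem vertex_of_annih {A B : AddSubgroup R} (hA : A ∈ IPO R) (hA0 : A ≠ ⊥)
    (hB : APOGVertex R B) (h : A * B = ⊥ ∨ B * A = ⊥) : APOGVertex R A :=
  ⟨hA, hA0, B, hB.1, hB.2.1, h⟩

/-- If `A^l = A^r`, every vertex has both a right and a left annihilating vertex. -/
theorem vertex_both {A : AddSubgroup R} (hEq : AleftIPO R = ArightIPO R)
    (hA : APOGVertex R A) :
    (∃ X, APOGVertex R X ∧ A * X = ⊥) ∧ ∃ Y, APOGVertex R Y ∧ Y * A = ⊥ := by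
  obtain ⟨hAI, hA0, B, hBI, hB0, hc⟩ := hA
  have hAv : APOGVertex R A := ⟨hAI, hA0, B, hBI, hB0, hc⟩
  have hBv : APOGVertex R B := ⟨hBI, hB0, A, hAI, hA0, hc.symm.imp id id⟩
  rcases hc with h | h
  · have hr : A ∈ ArightIPO R := ⟨hAv, B, hBv, h⟩
    have hl : A ∈ AleftIPO R := hEq ▸ hr
    exact ⟨⟨B, hBv, h⟩, hl.2⟩
  · have hl : A ∈ AleftIPO R := ⟨hAv, B, hBv, h⟩
    have hr : A ∈ ArightIPO R := hEq ▸ hl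
    exact ⟨hr.2, ⟨B, hBv, h⟩⟩

/-- Path of length 2 through a product vertex `C`. -/
theorem path2_of_mid {A B C : AddSubgroup R} (hA : APOGVertex R A) (hB : APOGVertex R B)
    (hC : C ∈ IPO R) (hC0 : C ≠ ⊥) (hAC : A * C = ⊥) (hCB : C * B = ⊥)
    (hAB : A * B ≠ ⊥) : APOGPathLe3 R A B := by
  have hCv : APOGVertex R C := vertex_of_annih hC hC0 hA (Or.inr hAC)
  have hne1 : A ≠ C := fun h => hAB (h ▸ hCB)
  have hne2 : C ≠ B := fun h => hAB (h ▸ hAC)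
  exact Or.inr (Or.inl ⟨C, ⟨hA, hCv, hne1, hAC⟩, ⟨hCv, hB, hne2, hCB⟩⟩)

theorem path3_of_eq (hEq : AleftIPO R = ArightIPO R) :
    ∀ A B : AddSubgroup R, APOGVertex R A → APOGVertex R B → A ≠ B →
      APOGPathLe3 R A B := by
  intro A B hA hB hne
  by_cases hAB : A * B = ⊥
  · exact Or.inl ⟨hA, hB, hne, hAB⟩
  obtain ⟨X, hX, hAX⟩ := (vertex_both hEq hA).1
  obtain ⟨Y, hY, hYB⟩ := (vertex_both hEq hB).2
  have hXB' : X ≠ B := fun h => hAB (h ▸ hAX)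
  have hYA' : Y ≠ A := fun h => hAB (h ▸ hYB)
  by_cases hXB : X * B = ⊥
  · have hAX' : A ≠ X := fun h => hAB (h ▸ hXB)
    exact Or.inr (Or.inl ⟨X, ⟨hA, hX, hAX', hAX⟩, ⟨hX, hB, hXB', hXB⟩⟩)
  by_cases hAY : A * Y = ⊥
  · have hYB'' : Y ≠ B := fun h => hAB (h ▸ hAY)
    exact Or.inr (Or.inl ⟨Y, ⟨hA, hY, hYA'.symm, hAY⟩, ⟨hY, hB, hYB'', hYB⟩⟩)
  by_cases hXA : X = A
  · -- A * A = ⊥; use C = A * Y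
    subst hXA
    refine path2_of_mid hA hB (IPO_mul_mem hA.1 hY.1) hAY ?_ ?_ hAB
    · rw [← ag_mul_assoc, hAX, ag_bot_mul]
    · rw [ag_mul_assoc, hYB, ag_mul_bot]
  by_cases hYB2 : Y = B
  · -- B * B = ⊥; use C = X * B
    subst hYB2
    refine path2_of_mid hA hB (IPO_mul_mem hX.1 hB.1) hXB ?_ ?_ hAB
    · rw [← ag_mul_assoc, hAX, ag_bot_mul]
    · rw [ag_mul_assoc, hYB, ag_mul_bot]
  by_cases hXY : X * Y = ⊥
  · have hXY' : X ≠ Y := fun h => hXB (h ▸ hYB)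
    exact Or.inr (Or.inr ⟨X, Y, ⟨hA, hX, Ne.symm hXA, hAX⟩, ⟨hX, hY, hXY', hXY⟩,
      ⟨hY, hB, hYB2, hYB⟩⟩)
  · refine path2_of_mid hA hB (IPO_mul_mem hX.1 hY.1) hXY ?_ ?_ hAB
    · rw [← ag_mul_assoc, hAX, ag_bot_mul]
    · rw [ag_mul_assoc, hYB, ag_mul_bot]

end Aux

/-- `APOG(R)` is connected iff `A^l(IPO(R)) = A^r(IPO(R))`; moreover,
if `APOG(R)` is connected then every pair of distinct vertices is joined by a directed
path of length at most `3`, i.e. `diam(APOG(R)) ≤ 3`. -/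
theorem APOG_connected_iff (R : Type*) [Ring R] :
    (APOGConnected R ↔ AleftIPO R = ArightIPO R) ∧
    (APOGConnected R →
      ∀ A B : AddSubgroup R, APOGVertex R A → APOGVertex R B → A ≠ B →
        APOGPathLe3 R A B) := by
  have eq_of_conn : APOGConnected R → AleftIPO R = ArightIPO R := by
    intro hc
    ext A
    constructor
    · rintro ⟨hA, B, hB, hBA⟩
      by_cases h : A = B
      · subst h; exact ⟨hA, A, hA, hBA⟩
      · obtain ⟨C, hAC, -⟩ := (Relation.TransGen.head'_iff).mp (hc A B hA hB h)
        exact ⟨hA, C, hAC.2.1, hAC.2.2.2⟩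
    · rintro ⟨hA, B, hB, hAB⟩
      by_cases h : B = A
      · subst h; exact ⟨hA, B, hA, hAB⟩
      · obtain ⟨D, -, hDA⟩ := (Relation.TransGen.tail'_iff).mp (hc B A hB hA h)
        exact ⟨hA, D, hDA.1, hDA.2.2.2⟩
  have conn_of_eq : AleftIPO R = ArightIPO R → APOGConnected R := by
    intro hEq A B hA hB hne
    rcases path3_of_eq hEq A B hA hB hne with h | ⟨C, h1, h2⟩ | ⟨C, D, h1, h2, h3⟩
    · exact Relation.TransGen.single h
    · exact (Relation.TransGen.single h1).tail h2
    · exact ((Relation.TransGen.single h1).tail h2).tail h3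
  exact ⟨⟨eq_of_conn, conn_of_eq⟩, fun hc => path3_of_eq (eq_of_conn hc)⟩
end

section
/- Let R be a ring with identity and let I = Rx (or I = xR) be a principal left (or right) ideal of R, for some nonzero x ∈ R, such that I is a vertex of APOG(R). If every element of ad(I) that is a left or a right ideal of R is a finite set, then R is a finite ring. -/
open scoped Pointwise

/-- `A ⇌ B`: `A ≠ B` and `A*B = 0` or `B*A = 0`. -/
def APOGAdj (R : Type*) [Ring R] (A B : AddSubgroup R) : Prop :=
  A ≠ B ∧ (A * B = ⊥ ∨ B * A = ⊥)

/-- `ad(C)`: the vertices `A` with `A = C`, or `C ⇌ A`, or `C ⇌ B ⇌ A` for some vertex `B`. -/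
def ad (R : Type*) [Ring R] (C : AddSubgroup R) : Set (AddSubgroup R) :=
  {A | APOGVertex R A ∧ (A = C ∨ APOGAdj R C A ∨
    ∃ B, APOGVertex R B ∧ APOGAdj R C B ∧ APOGAdj R B A)}

/-- The principal left ideal `Rx`. -/
def leftPrincipal {R : Type*} [Ring R] (x : R) : AddSubgroup R where
  carrier := Set.range fun r => r * x
  zero_mem' := ⟨0, zero_mul x⟩
  add_mem' := by rintro a b ⟨r, rfl⟩ ⟨s, rfl⟩; exact ⟨r + s, by simp [add_mul]⟩
  neg_mem' := by rintro a ⟨r, rfl⟩; exact ⟨-r, by simp⟩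

/-- The principal right ideal `xR`. -/
def rightPrincipal {R : Type*} [Ring R] (x : R) : AddSubgroup R where
  carrier := Set.range fun r => x * r
  zero_mem' := ⟨0, mul_zero x⟩
  add_mem' := by rintro a b ⟨r, rfl⟩ ⟨s, rfl⟩; exact ⟨r + s, by simp [mul_add]⟩
  neg_mem' := by rintro a ⟨r, rfl⟩; exact ⟨-r, by simp⟩

namespace APOGAux

variable {R : Type*} [Ring R]

lemma mem_mul_of {M N : AddSubgroup R} {a b : R} (ha : a ∈ M) (hb : b ∈ N) :
    a * b ∈ M * N := AddSubmonoid.mul_mem_mul ha hb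

lemma mul_le' {M N P : AddSubgroup R} (h : ∀ m ∈ M, ∀ n ∈ N, m * n ∈ P) : M * N ≤ P :=
  fun _ hz => AddSubmonoid.mul_induction_on hz h fun _ _ => add_mem

lemma mul_eq_bot' {M N : AddSubgroup R} (h : ∀ m ∈ M, ∀ n ∈ N, m * n = 0) : M * N = ⊥ :=
  le_bot_iff.mp (mul_le' fun m hm n hn => by
    simp only [AddSubgroup.mem_bot]; exact h m hm n hn)

lemma eq_zero_of_mul_bot {M N : AddSubgroup R} (h : M * N = ⊥) {a b : R}
    (ha : a ∈ M) (hb : b ∈ N) : a * b = 0 := by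
  have := mem_mul_of ha hb
  rwa [h, AddSubgroup.mem_bot] at this

lemma mem_IPO_of_right {A : AddSubgroup R} (h : IsRightIdeal R A) : A ∈ IPO R := by
  refine ⟨A, ⊤, Or.inr h, Or.inl fun _ _ _ => AddSubgroup.mem_top _, ?_⟩
  refine le_antisymm (fun a ha => ?_) (mul_le' fun a ha r _ => h r a ha)
  simpa using mem_mul_of ha (AddSubgroup.mem_top (1 : R))

lemma mem_IPO_of_left {A : AddSubgroup R} (h : IsLeftIdeal R A) : A ∈ IPO R := by
  refine ⟨⊤, A, Or.inl fun _ _ _ => AddSubgroup.mem_top _, Or.inl h, ?_⟩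
  refine le_antisymm (fun a ha => ?_) (mul_le' fun r _ a ha => h r a ha)
  simpa using mem_mul_of (AddSubgroup.mem_top (1 : R)) ha

/-- The right annihilator of an additive subgroup. -/
def rAnn (I : AddSubgroup R) : AddSubgroup R where
  carrier := {a | ∀ i ∈ I, i * a = 0}
  zero_mem' := fun i _ => mul_zero i
  add_mem' := fun {a b} ha hb i hi => by rw [mul_add, ha i hi, hb i hi, add_zero]
  neg_mem' := fun {a} ha i hi => by rw [mul_neg, ha i hi, neg_zero]

/-- The left annihilator of an additive subgroup. -/
def lAnn (I : AddSubgroup R) : AddSubgroup R where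
  carrier := {a | ∀ i ∈ I, a * i = 0}
  zero_mem' := fun i _ => zero_mul i
  add_mem' := fun {a b} ha hb i hi => by rw [add_mul, ha i hi, hb i hi, add_zero]
  neg_mem' := fun {a} ha i hi => by rw [neg_mul, ha i hi, neg_zero]

lemma mem_rAnn {I : AddSubgroup R} {a : R} : a ∈ rAnn I ↔ ∀ i ∈ I, i * a = 0 := Iff.rfl
lemma mem_lAnn {I : AddSubgroup R} {a : R} : a ∈ lAnn I ↔ ∀ i ∈ I, a * i = 0 := Iff.rfl

/-- If there is an additive hom from `R` to a finite type whose kernel is finite,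
then `R` is finite. -/
lemma finite_aux {M : Type*} [AddCommGroup M] [Finite M] (φ : R →+ M)
    (h : ((φ.ker : AddSubgroup R) : Set R).Finite) : Finite R := by
  haveI : Finite φ.ker := h.to_subtype
  haveI : Finite (R ⧸ φ.ker) :=
    Finite.of_equiv _ (QuotientAddGroup.quotientKerEquivRange φ).toEquiv.symm
  exact Finite.of_equiv ((R ⧸ φ.ker) × φ.ker)
    (AddSubgroup.addGroupEquivQuotientProdAddSubgroup (s := φ.ker)).symm

end APOGAux

/-- If `I = Rx` (or `I = xR`) is a principal one-sided ideal which is a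
vertex of `APOG(R)` and every left or right ideal belonging to `ad(I)` is finite, then
the ring `R` is finite. -/
theorem finite_of_ad_finite (R : Type*) [Ring R] (x : R) (hx : x ≠ 0)
    (I : AddSubgroup R) (hI : I = leftPrincipal x ∨ I = rightPrincipal x)
    (hIv : APOGVertex R I)
    (hfin : ∀ A ∈ ad R I, IsOneSidedIdeal R A → (A : Set R).Finite) :
    Finite R := by
  clear hx hI
  obtain ⟨hIPO, hIne, B, hBIPO, hBne, hB⟩ := hIv
  rcases hB with hIB | hBI
  · -- Case 1 : I * B = ⊥.  Use A := rAnn I.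
    have hAr : IsRightIdeal R (APOGAux.rAnn I) := fun r a ha i hi => by
      rw [← mul_assoc, ha i hi, zero_mul]
    have hAI : I * APOGAux.rAnn I = ⊥ :=
      APOGAux.mul_eq_bot' fun i hi a ha => ha i hi
    have hBle : B ≤ APOGAux.rAnn I := fun b hb i hi =>
      APOGAux.eq_zero_of_mul_bot hIB hi hb
    have hAne : APOGAux.rAnn I ≠ ⊥ := fun h => hBne (le_bot_iff.mp (h ▸ hBle))
    have vertexA : APOGVertex R (APOGAux.rAnn I) :=
      ⟨APOGAux.mem_IPO_of_right hAr, hAne, I, hIPO, hIne, Or.inr hAI⟩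
    have adA : APOGAux.rAnn I ∈ ad R I := by
      refine ⟨vertexA, ?_⟩
      by_cases hAeq : APOGAux.rAnn I = I
      · exact Or.inl hAeq
      · exact Or.inr (Or.inl ⟨fun h => hAeq h.symm, Or.inl hAI⟩)
    have hAfin : ((APOGAux.rAnn I : AddSubgroup R) : Set R).Finite :=
      hfin _ adA (Or.inr hAr)
    haveI : Finite (APOGAux.rAnn I) := hAfin.to_subtype
    let φ : R →+ (APOGAux.rAnn I → APOGAux.rAnn I) :=
      { toFun := fun s a => ⟨(a : R) * s, hAr s a a.2⟩
        map_zero' := by funext a; exact Subtype.ext (mul_zero _)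
        map_add' := fun s t => by funext a; exact Subtype.ext (mul_add _ _ _) }
    have hmemker : ∀ c : R, c ∈ φ.ker ↔ ∀ a ∈ APOGAux.rAnn I, a * c = 0 := by
      intro c
      rw [AddMonoidHom.mem_ker]
      constructor
      · intro h a ha
        exact Subtype.ext_iff.mp (congrFun h ⟨a, ha⟩)
      · intro h; funext a; exact Subtype.ext (h a a.2)
    have hCl : IsLeftIdeal R φ.ker := fun r c hc => (hmemker _).mpr fun a ha => by
      rw [← mul_assoc]; exact (hmemker c).mp hc (a * r) (hAr r a ha)
    have hAC : APOGAux.rAnn I * φ.ker = ⊥ :=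
      APOGAux.mul_eq_bot' fun a ha c hc => (hmemker c).mp hc a ha
    have hCfin : ((φ.ker : AddSubgroup R) : Set R).Finite := by
      by_cases hC0 : φ.ker = ⊥
      · rw [hC0]; simpa using Set.finite_singleton (0 : R)
      by_cases hCA : φ.ker = APOGAux.rAnn I
      · rw [hCA]; exact hAfin
      refine hfin _ ?_ (Or.inl hCl)
      have vertexC : APOGVertex R φ.ker :=
        ⟨APOGAux.mem_IPO_of_left hCl, hC0, APOGAux.rAnn I,
          APOGAux.mem_IPO_of_right hAr, hAne, Or.inr hAC⟩
      refine ⟨vertexC, ?_⟩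
      by_cases hCI : φ.ker = I
      · exact Or.inl hCI
      by_cases hAeq : APOGAux.rAnn I = I
      · exact Or.inr (Or.inl ⟨fun h => hCI h.symm, Or.inl (APOGAux.mul_eq_bot' fun i hi c hc => (hmemker c).mp hc i (by rw [hAeq]; exact hi))⟩)
      · exact Or.inr (Or.inr ⟨APOGAux.rAnn I, vertexA,
          ⟨fun h => hAeq h.symm, Or.inl hAI⟩,
          ⟨fun h => hCA h.symm, Or.inl hAC⟩⟩)
    exact APOGAux.finite_aux φ hCfin
  · -- Case 2 : B * I = ⊥.  Use A := lAnn I.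
    have hAl : IsLeftIdeal R (APOGAux.lAnn I) := fun r a ha i hi => by
      rw [mul_assoc, ha i hi, mul_zero]
    have hAI : APOGAux.lAnn I * I = ⊥ :=
      APOGAux.mul_eq_bot' fun a ha i hi => ha i hi
    have hBle : B ≤ APOGAux.lAnn I := fun b hb i hi =>
      APOGAux.eq_zero_of_mul_bot hBI hb hi
    have hAne : APOGAux.lAnn I ≠ ⊥ := fun h => hBne (le_bot_iff.mp (h ▸ hBle))
    have vertexA : APOGVertex R (APOGAux.lAnn I) :=
      ⟨APOGAux.mem_IPO_of_left hAl, hAne, I, hIPO, hIne, Or.inl hAI⟩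
    have adA : APOGAux.lAnn I ∈ ad R I := by
      refine ⟨vertexA, ?_⟩
      by_cases hAeq : APOGAux.lAnn I = I
      · exact Or.inl hAeq
      · exact Or.inr (Or.inl ⟨fun h => hAeq h.symm, Or.inr hAI⟩)
    have hAfin : ((APOGAux.lAnn I : AddSubgroup R) : Set R).Finite :=
      hfin _ adA (Or.inl hAl)
    haveI : Finite (APOGAux.lAnn I) := hAfin.to_subtype
    let φ : R →+ (APOGAux.lAnn I → APOGAux.lAnn I) :=
      { toFun := fun s a => ⟨s * (a : R), hAl s a a.2⟩
        map_zero' := by funext a; exact Subtype.ext (zero_mul _)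
        map_add' := fun s t => by funext a; exact Subtype.ext (add_mul _ _ _) }
    have hmemker : ∀ c : R, c ∈ φ.ker ↔ ∀ a ∈ APOGAux.lAnn I, c * a = 0 := by
      intro c
      rw [AddMonoidHom.mem_ker]
      constructor
      · intro h a ha
        exact Subtype.ext_iff.mp (congrFun h ⟨a, ha⟩)
      · intro h; funext a; exact Subtype.ext (h a a.2)
    have hCr : IsRightIdeal R φ.ker := fun r c hc => (hmemker _).mpr fun a ha => by
      rw [mul_assoc]; exact (hmemker c).mp hc (r * a) (hAl r a ha)
    have hCA : φ.ker * APOGAux.lAnn I = ⊥ :=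
      APOGAux.mul_eq_bot' fun c hc a ha => (hmemker c).mp hc a ha
    have hCfin : ((φ.ker : AddSubgroup R) : Set R).Finite := by
      by_cases hC0 : φ.ker = ⊥
      · rw [hC0]; simpa using Set.finite_singleton (0 : R)
      by_cases hCAeq : φ.ker = APOGAux.lAnn I
      · rw [hCAeq]; exact hAfin
      refine hfin _ ?_ (Or.inr hCr)
      have vertexC : APOGVertex R φ.ker :=
        ⟨APOGAux.mem_IPO_of_right hCr, hC0, APOGAux.lAnn I,
          APOGAux.mem_IPO_of_left hAl, hAne, Or.inl hCA⟩
      refine ⟨vertexC, ?_⟩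
      by_cases hCI : φ.ker = I
      · exact Or.inl hCI
      by_cases hAeq : APOGAux.lAnn I = I
      · exact Or.inr (Or.inl ⟨fun h => hCI h.symm, Or.inr (APOGAux.mul_eq_bot' fun c hc i hi => (hmemker c).mp hc i (by rw [hAeq]; exact hi))⟩)
      · exact Or.inr (Or.inr ⟨APOGAux.lAnn I, vertexA,
          ⟨fun h => hAeq h.symm, Or.inr hAI⟩,
          ⟨fun h => hCAeq h.symm, Or.inr hCA⟩⟩)
    exact APOGAux.finite_aux φ hCfin
end

section
/- Let R be a ring with identity such that APOG(R) ≠ ∅. Then R is a left and right Noetherian ring if and only if the vertex set of APOG(R) satisfies the ascending chain condition both on its elements that are left ideals of R and on its elements that are right ideals of R. -/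
open scoped Pointwise

/-- A family `T` of additive subgroups satisfies the descending chain condition. -/
def DCCOn (R : Type*) [Ring R] (T : Set (AddSubgroup R)) : Prop :=
  ∀ f : ℕ → AddSubgroup R, (∀ n, f n ∈ T) → (∀ n, f (n + 1) ≤ f n) →
    ∃ N, ∀ n, N ≤ n → f n = f N

/-- A family `T` of additive subgroups satisfies the ascending chain condition. -/
def ACCOn (R : Type*) [Ring R] (T : Set (AddSubgroup R)) : Prop :=
  ∀ f : ℕ → AddSubgroup R, (∀ n, f n ∈ T) → (∀ n, f n ≤ f (n + 1)) →
    ∃ N, ∀ n, N ≤ n → f n = f N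

section Aux

variable {R : Type*} [Ring R]

lemma exists_ne_zero_of_ne_bot {M : AddSubgroup R} (h : M ≠ ⊥) : ∃ x ∈ M, x ≠ 0 := by
  by_contra hc
  push_neg at hc
  exact h (le_antisymm (fun x hx => by simpa using hc x hx) bot_le)

lemma mul_eq_bot_of_forall {A B : AddSubgroup R} (h : ∀ a ∈ A, ∀ b ∈ B, a * b = 0) :
    A * B = ⊥ :=
  le_antisymm (AddSubmonoid.mul_le.2 fun a ha b hb => by
    simp [AddSubgroup.mem_bot, h a ha b hb]) bot_le

lemma top_isLeftIdeal : IsLeftIdeal R (⊤ : AddSubgroup R) := fun _ _ _ => trivial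

lemma top_isRightIdeal : IsRightIdeal R (⊤ : AddSubgroup R) := fun _ _ _ => trivial

lemma leftIdeal_mem_IPO {J : AddSubgroup R} (hJ : IsLeftIdeal R J) : J ∈ IPO R := by
  refine ⟨⊤, J, Or.inl top_isLeftIdeal, Or.inl hJ, ?_⟩
  refine le_antisymm (fun j hj => ?_) (AddSubmonoid.mul_le.2 fun r _ j hj => hJ r j hj)
  have h1 : (1 : R) * j ∈ (⊤ : AddSubgroup R) * J :=
    AddSubmonoid.mul_mem_mul (AddSubgroup.mem_top 1) hj
  simpa using h1

lemma rightIdeal_mem_IPO {J : AddSubgroup R} (hJ : IsRightIdeal R J) : J ∈ IPO R := by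
  refine ⟨J, ⊤, Or.inr hJ, Or.inr top_isRightIdeal, ?_⟩
  refine le_antisymm (fun j hj => ?_) (AddSubmonoid.mul_le.2 fun j hj r _ => hJ r j hj)
  have h1 : j * (1 : R) ∈ J * (⊤ : AddSubgroup R) :=
    AddSubmonoid.mul_mem_mul hj (AddSubgroup.mem_top 1)
  simpa using h1

/-- The right ideal `xR`. -/
def rSpan (x : R) : AddSubgroup R := (AddMonoidHom.mulLeft x).range

/-- The left ideal `Rx`. -/
def lSpan (x : R) : AddSubgroup R := (AddMonoidHom.mulRight x).range

lemma rSpan_isRightIdeal (x : R) : IsRightIdeal R (rSpan x) := by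
  rintro r _ ⟨s, rfl⟩
  exact ⟨s * r, (mul_assoc x s r).symm⟩

lemma lSpan_isLeftIdeal (x : R) : IsLeftIdeal R (lSpan x) := by
  rintro r _ ⟨s, rfl⟩
  exact ⟨r * s, mul_assoc r s x⟩

lemma rSpan_ne_bot {x : R} (hx : x ≠ 0) : rSpan x ≠ ⊥ := by
  intro h
  have : x ∈ rSpan x := ⟨1, mul_one x⟩
  rw [h, AddSubgroup.mem_bot] at this
  exact hx this

lemma lSpan_ne_bot {x : R} (hx : x ≠ 0) : lSpan x ≠ ⊥ := by
  intro h
  have : x ∈ lSpan x := ⟨1, one_mul x⟩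
  rw [h, AddSubgroup.mem_bot] at this
  exact hx this

/-- A nonzero left ideal all of whose elements kill `x ≠ 0` on the left is a vertex. -/
lemma vertex_of_leftIdeal {J : AddSubgroup R} (hJ : IsLeftIdeal R J) (hne : J ≠ ⊥)
    {x : R} (hx : x ≠ 0) (h : ∀ j ∈ J, j * x = 0) : APOGVertex R J := by
  refine ⟨leftIdeal_mem_IPO hJ, hne, rSpan x,
    rightIdeal_mem_IPO (rSpan_isRightIdeal x), rSpan_ne_bot hx, Or.inl ?_⟩
  refine mul_eq_bot_of_forall fun j hj b hb => ?_
  obtain ⟨s, rfl⟩ := hb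
  show j * (x * s) = 0
  rw [← mul_assoc, h j hj, zero_mul]

/-- A nonzero right ideal all of whose elements are killed by `x ≠ 0` on the left
is a vertex. -/
lemma vertex_of_rightIdeal {J : AddSubgroup R} (hJ : IsRightIdeal R J) (hne : J ≠ ⊥)
    {x : R} (hx : x ≠ 0) (h : ∀ j ∈ J, x * j = 0) : APOGVertex R J := by
  refine ⟨rightIdeal_mem_IPO hJ, hne, lSpan x,
    leftIdeal_mem_IPO (lSpan_isLeftIdeal x), lSpan_ne_bot hx, Or.inr ?_⟩
  refine mul_eq_bot_of_forall fun b hb j hj => ?_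
  obtain ⟨s, rfl⟩ := hb
  show s * x * j = 0
  rw [mul_assoc, h j hj, mul_zero]

/-- Stabilization of an ascending chain whose nonzero members lie in a set with ACC. -/
lemma stab_of_accOn {T : Set (AddSubgroup R)} (hacc : ACCOn R T)
    (g : ℕ → AddSubgroup R) (hmono : ∀ n, g n ≤ g (n + 1))
    (hT : ∀ n, g n ≠ ⊥ → g n ∈ T) : ∃ N, ∀ n, N ≤ n → g n = g N := by
  have hmono' : Monotone g := monotone_nat_of_le_succ hmono
  by_cases hb : ∀ n, g n = ⊥
  · exact ⟨0, fun n _ => by rw [hb n, hb 0]⟩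
  · push_neg at hb
    obtain ⟨m, hm⟩ := hb
    have hnb : ∀ n, g (n + m) ≠ ⊥ := fun n h => hm (le_antisymm
      (h ▸ hmono' (Nat.le_add_left m n)) bot_le)
    obtain ⟨N, hN⟩ := hacc (fun n => g (n + m)) (fun n => hT _ (hnb n))
      (fun n => hmono' (by omega))
    refine ⟨N + m, fun n hn => ?_⟩
    have : g n = g ((n - m) + m) := by rw [Nat.sub_add_cancel (by omega)]
    rw [this, hN (n - m) (by omega)]

/-- The key transfer: ACC on left-ideal vertices implies ACC on all left ideals,
given a zero-divisor pair `x * y = 0`. -/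
lemma accOn_leftIdeals {x y : R} (hx : x ≠ 0) (hy : y ≠ 0) (hxy : x * y = 0)
    (hacc : ACCOn R {A | APOGVertex R A ∧ IsLeftIdeal R A}) :
    ACCOn R {J | IsLeftIdeal R J} := by
  intro f hf hmono
  have hmono' : Monotone f := monotone_nat_of_le_succ hmono
  -- kernel of right multiplication by x
  set K : AddSubgroup R := (AddMonoidHom.mulRight x).ker with hK
  have hKmem : ∀ r : R, r ∈ K ↔ r * x = 0 := fun r => Iff.rfl
  set a : ℕ → AddSubgroup R := fun n => f n ⊓ K with ha
  set b : ℕ → AddSubgroup R := fun n => (f n).map (AddMonoidHom.mulRight x) with hb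
  have haleft : ∀ n, IsLeftIdeal R (a n) := by
    intro n r j hj
    have h2 : j * x = 0 := hj.2
    exact ⟨hf n r j hj.1, show r * j * x = 0 by rw [mul_assoc, h2, mul_zero]⟩
  have hbleft : ∀ n, IsLeftIdeal R (b n) := by
    rintro n r _ ⟨j, hj, rfl⟩
    exact ⟨r * j, hf n r j hj, mul_assoc r j x⟩
  have havert : ∀ n, a n ≠ ⊥ → a n ∈ {A | APOGVertex R A ∧ IsLeftIdeal R A} := by
    intro n hne
    exact ⟨vertex_of_leftIdeal (haleft n) hne hx (fun j hj => hj.2), haleft n⟩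
  have hbvert : ∀ n, b n ≠ ⊥ → b n ∈ {A | APOGVertex R A ∧ IsLeftIdeal R A} := by
    intro n hne
    refine ⟨vertex_of_leftIdeal (hbleft n) hne hy ?_, hbleft n⟩
    rintro _ ⟨j, _, rfl⟩
    show j * x * y = 0
    rw [mul_assoc, hxy, mul_zero]
  obtain ⟨N₁, hN₁⟩ := stab_of_accOn hacc a
    (fun n => inf_le_inf_right K (hmono n)) havert
  obtain ⟨N₂, hN₂⟩ := stab_of_accOn hacc b
    (fun n => AddSubgroup.map_mono (hmono n)) hbvert
  set N := max N₁ N₂ with hNdef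
  have haN : ∀ n, N ≤ n → a n = a N := by
    intro n hn
    rw [hN₁ n (le_trans (le_max_left _ _) hn), hN₁ N (le_max_left _ _)]
  have hbN : ∀ n, N ≤ n → b n = b N := by
    intro n hn
    rw [hN₂ n (le_trans (le_max_right _ _) hn), hN₂ N (le_max_right _ _)]
  refine ⟨N, fun n hn => le_antisymm (fun c hc => ?_) (hmono' hn)⟩
  have hcx : c * x ∈ b N := by
    rw [← hbN n hn]
    exact ⟨c, hc, rfl⟩
  obtain ⟨d, hd, hdx⟩ := hcx
  have hsub : c - d ∈ a n := by
    refine ⟨AddSubgroup.sub_mem _ hc (hmono' hn hd), ?_⟩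
    have hdx' : d * x = c * x := hdx
    show (c - d) * x = 0
    rw [sub_mul, hdx', sub_self]
  rw [haN n hn] at hsub
  have : c - d ∈ f N := hsub.1
  simpa using AddSubgroup.add_mem _ this hd

/-- Symmetric transfer for right ideals. -/
lemma accOn_rightIdeals {x y : R} (hx : x ≠ 0) (hy : y ≠ 0) (hxy : x * y = 0)
    (hacc : ACCOn R {A | APOGVertex R A ∧ IsRightIdeal R A}) :
    ACCOn R {J | IsRightIdeal R J} := by
  intro f hf hmono
  have hmono' : Monotone f := monotone_nat_of_le_succ hmono
  -- kernel of left multiplication by y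
  set K : AddSubgroup R := (AddMonoidHom.mulLeft y).ker with hK
  set a : ℕ → AddSubgroup R := fun n => f n ⊓ K with ha
  set b : ℕ → AddSubgroup R := fun n => (f n).map (AddMonoidHom.mulLeft y) with hb
  have haright : ∀ n, IsRightIdeal R (a n) := by
    intro n r j hj
    refine ⟨hf n r j hj.1, ?_⟩
    show y * (j * r) = 0
    have h2 : y * j = 0 := hj.2
    rw [← mul_assoc, h2, zero_mul]
  have hbright : ∀ n, IsRightIdeal R (b n) := by
    rintro n r _ ⟨j, hj, rfl⟩
    exact ⟨j * r, hf n r j hj, (mul_assoc y j r).symm⟩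
  have havert : ∀ n, a n ≠ ⊥ → a n ∈ {A | APOGVertex R A ∧ IsRightIdeal R A} := by
    intro n hne
    exact ⟨vertex_of_rightIdeal (haright n) hne hy (fun j hj => hj.2), haright n⟩
  have hbvert : ∀ n, b n ≠ ⊥ → b n ∈ {A | APOGVertex R A ∧ IsRightIdeal R A} := by
    intro n hne
    refine ⟨vertex_of_rightIdeal (hbright n) hne hx ?_, hbright n⟩
    rintro _ ⟨j, _, rfl⟩
    show x * (y * j) = 0
    rw [← mul_assoc, hxy, zero_mul]
  obtain ⟨N₁, hN₁⟩ := stab_of_accOn hacc a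
    (fun n => inf_le_inf_right K (hmono n)) havert
  obtain ⟨N₂, hN₂⟩ := stab_of_accOn hacc b
    (fun n => AddSubgroup.map_mono (hmono n)) hbvert
  set N := max N₁ N₂ with hNdef
  have haN : ∀ n, N ≤ n → a n = a N := by
    intro n hn
    rw [hN₁ n (le_trans (le_max_left _ _) hn), hN₁ N (le_max_left _ _)]
  have hbN : ∀ n, N ≤ n → b n = b N := by
    intro n hn
    rw [hN₂ n (le_trans (le_max_right _ _) hn), hN₂ N (le_max_right _ _)]
  refine ⟨N, fun n hn => le_antisymm (fun c hc => ?_) (hmono' hn)⟩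
  have hcx : y * c ∈ b N := by
    rw [← hbN n hn]
    exact ⟨c, hc, rfl⟩
  obtain ⟨d, hd, hdx⟩ := hcx
  have hsub : c - d ∈ a n := by
    refine ⟨AddSubgroup.sub_mem _ hc (hmono' hn hd), ?_⟩
    have hdx' : y * d = y * c := hdx
    show y * (c - d) = 0
    rw [mul_sub, hdx', sub_self]
  rw [haN n hn] at hsub
  have : c - d ∈ f N := hsub.1
  simpa using AddSubgroup.add_mem _ this hd

/-- From a vertex one extracts a nonzero elementwise zero-divisor pair. -/
lemma exists_zero_pair (hne : ∃ A : AddSubgroup R, APOGVertex R A) :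
    ∃ x y : R, x ≠ 0 ∧ y ≠ 0 ∧ x * y = 0 := by
  obtain ⟨A, _, hAne, B, _, hBne, hAB⟩ := hne
  obtain ⟨u, hu, hu0⟩ := exists_ne_zero_of_ne_bot hAne
  obtain ⟨v, hv, hv0⟩ := exists_ne_zero_of_ne_bot hBne
  rcases hAB with h | h
  · refine ⟨u, v, hu0, hv0, ?_⟩
    have : u * v ∈ A * B := AddSubmonoid.mul_mem_mul hu hv
    rwa [h, AddSubgroup.mem_bot] at this
  · refine ⟨v, u, hv0, hu0, ?_⟩
    have : v * u ∈ B * A := AddSubmonoid.mul_mem_mul hv hu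
    rwa [h, AddSubgroup.mem_bot] at this

end Aux

/-- Suppose `APOG(R) ≠ ∅`.  Then `R` is left and right Noetherian iff
the vertex set of `APOG(R)` has ACC both on its members that are left ideals and on its
members that are right ideals. -/
theorem noetherian_iff_vertexSet_acc (R : Type*) [Ring R]
    (hne : ∃ A : AddSubgroup R, APOGVertex R A) :
    (ACCOn R {J | IsLeftIdeal R J} ∧ ACCOn R {J | IsRightIdeal R J}) ↔
      (ACCOn R {A | APOGVertex R A ∧ IsLeftIdeal R A} ∧
        ACCOn R {A | APOGVertex R A ∧ IsRightIdeal R A}) := by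
  constructor
  · rintro ⟨hL, hR⟩
    exact ⟨fun f hf hm => hL f (fun n => (hf n).2) hm,
      fun f hf hm => hR f (fun n => (hf n).2) hm⟩
  · rintro ⟨hL, hR⟩
    obtain ⟨x, y, hx, hy, hxy⟩ := exists_zero_pair hne
    exact ⟨accOn_leftIdeals hx hy hxy hL, accOn_rightIdeals hx hy hxy hR⟩
end
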